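/- Suppose W =_d 1−W on (0,1). Let (L_n)_{n≥0} be random variables satisfying L_0 = 0 and, for n ≥ 1, L_n =_d L_{Q*_n(1)} + 1_{{Q*_n(1)=n}}, where Q*_n(1) is independent of (L_k) and P{Q*_n(1)=m} = C(n,m)E[(1−W)^{n−m}W^m]. Then for every n ≥ 1, L_n is geometrically distributed with parameter 1/2: P{L_n = k} = 2^{−k−1} for all k ≥ 0. -/

import Mathlib

open MeasureTheory ProbabilityTheory Filter Set

/-- If `W =_d 1 - W` on `(0,1)`, the number of empty boxes `L_n` of the Bernoulli
sieve, whose laws `p n ·` satisfy the recursion driven by the jump chain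
`Q*_n(1)` with law `q n m = C(n,m) E[(1-W)^{n-m} W^m]`, is geometric(1/2) for
every `n ≥ 1`. -/
theorem symmetric_W_empty_boxes_geometric
    {Ω : Type*} [MeasureSpace Ω] [IsProbabilityMeasure (ℙ : Measure Ω)]
    (W : Ω → ℝ) (hmeas : Measurable W)
    (hval : ∀ᵐ ω ∂ℙ, W ω ∈ Set.Ioo (0 : ℝ) 1)
    (hsym : Measure.map W ℙ = Measure.map (fun ω => 1 - W ω) ℙ)
    (q : ℕ → ℕ → ℝ)
    (hq : ∀ n m, q n m = (n.choose m : ℝ) * ∫ ω, (1 - W ω) ^ (n - m) * (W ω) ^ m ∂ℙ)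
    (p : ℕ → ℕ → ℝ)
    (hp0 : p 0 0 = 1) (hp0' : ∀ k, k ≠ 0 → p 0 k = 0)
    (hrec : ∀ n, 1 ≤ n → ∀ k,
      p n k = (∑ m ∈ Finset.range n, q n m * p m k) +
        q n n * (if k = 0 then 0 else p n (k - 1))) :
    ∀ n, 1 ≤ n → ∀ k : ℕ, p n k = (2 : ℝ)⁻¹ ^ (k + 1) := by
  -- integrability of the integrands
  have hint : ∀ a b : ℕ, Integrable (fun ω => (1 - W ω) ^ a * (W ω) ^ b) ℙ := by
    intro a b
    apply Integrable.mono' (integrable_const (1 : ℝ))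
    · exact (((measurable_const.sub hmeas).pow_const a).mul
        (hmeas.pow_const b)).aestronglyMeasurable
    · filter_upwards [hval] with ω hω
      have h1 : 0 ≤ W ω := le_of_lt hω.1
      have h2 : W ω ≤ 1 := le_of_lt hω.2
      have ha : |1 - W ω| ≤ 1 := by rw [abs_le]; constructor <;> linarith
      have hb : |W ω| ≤ 1 := by rw [abs_le]; constructor <;> linarith
      rw [Real.norm_eq_abs, abs_mul, abs_pow, abs_pow]
      exact mul_le_one₀ (pow_le_one₀ (abs_nonneg _) ha)
        (pow_nonneg (abs_nonneg _) _) (pow_le_one₀ (abs_nonneg _) hb)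
  -- the q n · are a probability vector on {0,…,n}
  have hsum : ∀ n : ℕ, ∑ m ∈ Finset.range (n + 1), q n m = 1 := by
    intro n
    have h1 : ∑ m ∈ Finset.range (n + 1), q n m
        = ∫ ω, ∑ m ∈ Finset.range (n + 1),
            (n.choose m : ℝ) * ((1 - W ω) ^ (n - m) * (W ω) ^ m) ∂ℙ := by
      rw [integral_finset_sum _ (fun m _ => (hint (n - m) m).const_mul _)]
      refine Finset.sum_congr rfl fun m _ => ?_
      rw [hq, integral_const_mul]
    rw [h1]
    have h2 : ∀ ω, ∑ m ∈ Finset.range (n + 1),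
        (n.choose m : ℝ) * ((1 - W ω) ^ (n - m) * (W ω) ^ m) = 1 := by
      intro ω
      have := add_pow (W ω) (1 - W ω) n
      simp only [add_sub_cancel, one_pow] at this
      conv_rhs => rw [this]
      exact Finset.sum_congr rfl fun m _ => by ring
    simp only [h2]
    simp
  -- symmetry: E[(1-W)^n] = E[W^n]
  have hWn : ∀ n : ℕ, ∫ ω, (1 - W ω) ^ n ∂ℙ = ∫ ω, (W ω) ^ n ∂ℙ := by
    intro n
    have h1 : ∫ ω, (1 - W ω) ^ n ∂ℙ
        = ∫ x, x ^ n ∂(Measure.map (fun ω => 1 - W ω) ℙ) := by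
      rw [integral_map (show AEMeasurable (fun ω => 1 - W ω) ℙ from (measurable_const.sub hmeas).aemeasurable)
        (measurable_id'.pow_const n).aestronglyMeasurable]
    rw [h1, ← hsym, integral_map hmeas.aemeasurable
      (measurable_id'.pow_const n).aestronglyMeasurable]
  have hq0 : ∀ n : ℕ, q n 0 = q n n := by
    intro n
    rw [hq, hq]
    simp only [Nat.choose_self, Nat.choose_zero_right, Nat.cast_one, one_mul,
      Nat.sub_zero, Nat.sub_self, pow_zero, mul_one]
    rw [hWn n]
  intro n
  induction n using Nat.strong_induction_on with
  | _ n ih =>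
    intro hn
    obtain ⟨N, rfl⟩ : ∃ N, n = N + 1 := ⟨n - 1, (Nat.succ_pred_eq_of_pos hn).symm⟩
    set a : ℝ := q (N + 1) (N + 1) with ha
    -- sum over the middle
    have hS : ∑ i ∈ Finset.range N, q (N + 1) (i + 1) = 1 - 2 * a := by
      have h := hsum (N + 1)
      rw [Finset.sum_range_succ, Finset.sum_range_succ'] at h
      rw [ha]
      linarith [hq0 (N + 1)]
    have hmid : ∀ k : ℕ, ∑ m ∈ Finset.range (N + 1), q (N + 1) m * p m k
        = (1 - 2 * a) * (2 : ℝ)⁻¹ ^ (k + 1) + a * p 0 k := by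
      intro k
      rw [Finset.sum_range_succ']
      have : ∀ i ∈ Finset.range N, q (N + 1) (i + 1) * p (i + 1) k
          = q (N + 1) (i + 1) * (2 : ℝ)⁻¹ ^ (k + 1) := by
        intro i hi
        rw [ih (i + 1) (Nat.succ_lt_succ (Finset.mem_range.mp hi)) (Nat.succ_le_succ (Nat.zero_le i)) k]
      rw [Finset.sum_congr rfl this, ← Finset.sum_mul, hS, hq0 (N + 1), ← ha]
    intro k
    induction k with
    | zero =>
      rw [hrec (N + 1) (by omega) 0, hmid 0, hp0]
      simp only [if_pos rfl, mul_zero, add_zero]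
      norm_num
      linarith
    | succ k hk =>
      rw [hrec (N + 1) (by omega) (k + 1), hmid (k + 1),
        hp0' (k + 1) (by omega)]
      simp only [Nat.add_sub_cancel, if_neg (Nat.succ_ne_zero k)]
      rw [hk, ← ha]
      have h2 : (2 : ℝ)⁻¹ ^ (k + 1 + 1) = (2 : ℝ)⁻¹ ^ (k + 1) * 2⁻¹ := pow_succ _ _
      rw [h2]
      ring
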